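/- For a field F, q ∈ F with q ≠ 0 and q² ≠ 1, and all integers a, b, the determinant of the 2×2 matrix with rows ([a]_q[b+1]_q, [a]_q[b]_q) and ([a]_q[b]_q, [a+1]_q[b]_q) equals [a]_q·[b]_q·[a+b+1]_q. -/

import Mathlib

noncomputable def qint {F : Type*} [Field F] (q : F) (n : ℤ) : F :=
  (q ^ n - q ^ (-n)) / (q - q⁻¹)

theorem gram_det_two {F : Type*} [Field F] (q : F) (hq : q ≠ 0) (hq2 : q ^ 2 ≠ 1)
    (a b : ℤ) :
    Matrix.det !![qint q a * qint q (b + 1), qint q a * qint q b;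
                  qint q a * qint q b, qint q (a + 1) * qint q b]
      = qint q a * qint q b * qint q (a + b + 1) := by
  have hd : q - q⁻¹ ≠ 0 := by
    intro h
    apply hq2
    have := sub_eq_zero.mp h
    field_simp at this
    rw [this]
  have ha : (q:F) ^ a ≠ 0 := zpow_ne_zero _ hq
  have hb : (q:F) ^ b ≠ 0 := zpow_ne_zero _ hq
  simp only [qint, Matrix.det_fin_two_of, neg_add, zpow_add₀ hq, zpow_neg, zpow_one, mul_inv]
  generalize hdq : q - q⁻¹ = d at hd
  generalize q ^ a = x at ha
  generalize q ^ b = y at hb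
  have hP : x * d * (y * q * d) * (x * q * d * (y * d)) ≠ 0 := by
    apply_rules [mul_ne_zero]
  have hQ : x * d * (y * d) * (x * y * q * d) ≠ 0 := by
    apply_rules [mul_ne_zero]
  field_simp [hd, ha, hb, hq]
  rw [← hdq]
  field_simp
  ring
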